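/- Under the assumptions of the linear large deviation bound, the r-th moment satisfies E|∑_i a_i X_i|^r ≤ ∑_{k=1}^{r/2} S(r,k) γ^{2k} ψ^{r−2k}, where S(r,k) is the Stirling number of the second kind, γ = ((1/N)∑_i |a_i|²)^{1/2}, and ψ = (max_i |a_i|)/q. -/

import Mathlib

open MeasureTheory ProbabilityTheory Finset
open scoped ComplexConjugate

/-- Stirling numbers of the second kind. -/
def stirling : ℕ → ℕ → ℕ
  | 0, 0 => 1
  | 0, _ + 1 => 0
  | _ + 1, 0 => 0
  | n + 1, k + 1 => (k + 1) * stirling n (k + 1) + stirling n k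

section aux
variable {Ω : Type*} [MeasurableSpace Ω] {μ : Measure Ω} [IsProbabilityMeasure μ]

lemma image_cons {n N : ℕ} (x : Fin N) (g : Fin n → Fin N) :
    Finset.univ.image (Fin.cons x g : Fin (n+1) → Fin N) = insert x (Finset.univ.image g) := by
  ext y
  simp [Finset.mem_image, Fin.exists_fin_succ, Fin.cons_zero, Fin.cons_succ, eq_comm]


lemma count_le {N : ℕ} (w : Fin N → ℝ) (hw : ∀ i, 0 ≤ w i) :
    ∀ (n k : ℕ),
    ∑ G ∈ Finset.univ.filter (fun G : Fin n → Fin N => (Finset.univ.image G).card = k),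
        ∏ i ∈ Finset.univ.image G, w i
      ≤ (stirling n k : ℝ) * (∑ i, w i) ^ k := by
  have hW : (0:ℝ) ≤ ∑ i, w i := Finset.sum_nonneg fun i _ => hw i
  have hP : ∀ {n : ℕ} (g : Fin n → Fin N), (0:ℝ) ≤ ∏ i ∈ Finset.univ.image g, w i :=
    fun g => Finset.prod_nonneg fun i _ => hw i
  have hL : ∀ (n k : ℕ), (0:ℝ) ≤
      ∑ G ∈ Finset.univ.filter (fun G : Fin n → Fin N => (Finset.univ.image G).card = k),
        ∏ i ∈ Finset.univ.image G, w i :=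
    fun n k => Finset.sum_nonneg fun G _ => hP G
  intro n
  induction n with
  | zero =>
    intro k
    match k with
    | 0 => simp [stirling]
    | k + 1 =>
      have : Finset.univ.filter
          (fun G : Fin 0 → Fin N => (Finset.univ.image G).card = k + 1) = ∅ := by
        apply Finset.filter_false_of_mem
        intro G _
        simp [Finset.univ_eq_empty]
      simp [this, stirling]
  | succ n ih =>
    intro k
    -- rewrite LHS as double sum
    have key : ∑ G ∈ Finset.univ.filter
          (fun G : Fin (n+1) → Fin N => (Finset.univ.image G).card = k),
          ∏ i ∈ Finset.univ.image G, w i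
        = ∑ g : Fin n → Fin N, ∑ x : Fin N,
            (if (insert x (Finset.univ.image g)).card = k
              then ∏ i ∈ insert x (Finset.univ.image g), w i else 0) := by
      rw [Finset.sum_filter]
      rw [← Fintype.sum_equiv (Fin.consEquiv (fun _ => Fin N))
        (fun p => if (insert p.1 (Finset.univ.image p.2)).card = k
              then ∏ i ∈ insert p.1 (Finset.univ.image p.2), w i else 0)
        (fun G => if (Finset.univ.image G).card = k then ∏ i ∈ Finset.univ.image G, w i else 0)
        (by rintro ⟨x, g⟩
            show _ = if #(image (Fin.cons x g) univ) = k then ∏ i ∈ image (Fin.cons x g) univ, w i else 0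
            rw [image_cons])]
      rw [Fintype.sum_prod_type]
      exact Finset.sum_comm
    rw [key]
    -- now bound inner sums
    have inner : ∀ g : Fin n → Fin N,
        ∑ x : Fin N, (if (insert x (Finset.univ.image g)).card = k
            then ∏ i ∈ insert x (Finset.univ.image g), w i else 0)
        ≤ ((Finset.univ.image g).card : ℝ) *
            (if (Finset.univ.image g).card = k then ∏ i ∈ Finset.univ.image g, w i else 0)
          + (∑ i, w i) *
            (if (Finset.univ.image g).card + 1 = k then ∏ i ∈ Finset.univ.image g, w i else 0)
        := by
      intro g
      set t := Finset.univ.image g with ht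
      rw [← Finset.sum_filter_add_sum_filter_not Finset.univ (· ∈ t)]
      have h1 : ∑ x ∈ Finset.univ.filter (· ∈ t),
          (if (insert x t).card = k then ∏ i ∈ insert x t, w i else 0)
          = (t.card : ℝ) * (if t.card = k then ∏ i ∈ t, w i else 0) := by
        rw [Finset.sum_congr rfl (g := fun _ => if t.card = k then ∏ i ∈ t, w i else 0)
          (fun x hx => by
            rw [Finset.mem_filter] at hx
            rw [Finset.insert_eq_self.2 hx.2])]
        rw [Finset.sum_const, Finset.filter_mem_eq_inter, Finset.univ_inter, nsmul_eq_mul]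
      have h2 : ∑ x ∈ Finset.univ.filter (· ∉ t),
          (if (insert x t).card = k then ∏ i ∈ insert x t, w i else 0)
          ≤ (∑ i, w i) * (if t.card + 1 = k then ∏ i ∈ t, w i else 0) := by
        have : ∀ x ∈ Finset.univ.filter (· ∉ t),
            (if (insert x t).card = k then ∏ i ∈ insert x t, w i else 0)
            = w x * (if t.card + 1 = k then ∏ i ∈ t, w i else 0) := by
          intro x hx
          rw [Finset.mem_filter] at hx
          rw [Finset.card_insert_of_notMem hx.2, Finset.prod_insert hx.2, mul_ite, mul_zero]
        rw [Finset.sum_congr rfl this, ← Finset.sum_mul]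
        have hifnn : (0:ℝ) ≤ if t.card + 1 = k then ∏ i ∈ t, w i else 0 := by
          split
          · exact hP g
          · exact le_rfl
        apply mul_le_mul_of_nonneg_right _ hifnn
        exact Finset.sum_le_sum_of_subset_of_nonneg (Finset.subset_univ _)
          (fun i _ _ => hw i)
      exact add_le_add (le_of_eq h1) h2
    calc ∑ g : Fin n → Fin N, ∑ x : Fin N,
            (if (insert x (Finset.univ.image g)).card = k
              then ∏ i ∈ insert x (Finset.univ.image g), w i else 0)
        ≤ ∑ g : Fin n → Fin N,
            (((Finset.univ.image g).card : ℝ) *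
              (if (Finset.univ.image g).card = k then ∏ i ∈ Finset.univ.image g, w i else 0)
            + (∑ i, w i) *
              (if (Finset.univ.image g).card + 1 = k
                then ∏ i ∈ Finset.univ.image g, w i else 0)) :=
          Finset.sum_le_sum fun g _ => inner g
      _ ≤ (stirling (n+1) k : ℝ) * (∑ i, w i) ^ k := by
          rw [Finset.sum_add_distrib]
          match k with
          | 0 =>
            have e1 : ∀ g : Fin n → Fin N,
                ((Finset.univ.image g).card : ℝ) *
                  (if (Finset.univ.image g).card = 0
                    then ∏ i ∈ Finset.univ.image g, w i else 0) = 0 := by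
              intro g
              by_cases h : (Finset.univ.image g).card = 0
              · rw [h]; simp
              · simp [h]
            simp only [e1, Finset.sum_const_zero, zero_add]
            simp [stirling]
          | k + 1 =>
            have b1 : ∑ g : Fin n → Fin N,
                ((Finset.univ.image g).card : ℝ) *
                  (if (Finset.univ.image g).card = k + 1
                    then ∏ i ∈ Finset.univ.image g, w i else 0)
                ≤ ((k:ℝ) + 1) * ((stirling n (k+1) : ℝ) * (∑ i, w i) ^ (k+1)) := by
              have : ∀ g : Fin n → Fin N,
                  ((Finset.univ.image g).card : ℝ) *
                    (if (Finset.univ.image g).card = k + 1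
                      then ∏ i ∈ Finset.univ.image g, w i else 0)
                  = ((k:ℝ)+1) * (if (Finset.univ.image g).card = k + 1
                      then ∏ i ∈ Finset.univ.image g, w i else 0) := by
                intro g
                by_cases h : (Finset.univ.image g).card = k + 1
                · rw [h]; push_cast; ring
                · simp [h]
              rw [Finset.sum_congr rfl (fun g _ => this g), ← Finset.mul_sum]
              apply mul_le_mul_of_nonneg_left _ (by positivity)
              rw [← Finset.sum_filter]
              exact ih (k+1)
            have b2 : ∑ g : Fin n → Fin N,
                (∑ i, w i) * (if (Finset.univ.image g).card + 1 = k + 1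
                    then ∏ i ∈ Finset.univ.image g, w i else 0)
                ≤ (∑ i, w i) * ((stirling n k : ℝ) * (∑ i, w i) ^ k) := by
              rw [← Finset.mul_sum]
              apply mul_le_mul_of_nonneg_left _ hW
              simp only [Nat.add_right_cancel_iff]
              rw [← Finset.sum_filter]
              exact ih k
            calc _ ≤ ((k:ℝ) + 1) * ((stirling n (k+1) : ℝ) * (∑ i, w i) ^ (k+1))
                  + (∑ i, w i) * ((stirling n k : ℝ) * (∑ i, w i) ^ k) := add_le_add b1 b2
              _ = (stirling (n+1) (k+1) : ℝ) * (∑ i, w i) ^ (k+1) := by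
                  show _ = ((((k + 1) * stirling n (k + 1) + stirling n k : ℕ)) : ℝ) * _
                  push_cast
                  ring

lemma indep_integral_mul {f g : Ω → ℂ} (h : IndepFun f g μ)
    (hf : Integrable f μ) (hg : Integrable g μ) :
    ∫ ω, f ω * g ω ∂μ = (∫ ω, f ω ∂μ) * ∫ ω, g ω ∂μ := by
  have hfm : AEMeasurable f μ := hf.aemeasurable
  have hgm : AEMeasurable g μ := hg.aemeasurable
  have hmap := (indepFun_iff_map_prod_eq_prod_map_map hfm hgm).mp h
  have h1 : IsProbabilityMeasure (μ.map f) := Measure.isProbabilityMeasure_map hfm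
  have h2 : IsProbabilityMeasure (μ.map g) := Measure.isProbabilityMeasure_map hgm
  have e1 : ∫ ω, f ω * g ω ∂μ = ∫ p, p.1 * p.2 ∂(μ.map fun ω => (f ω, g ω)) := by
    rw [integral_map (f := fun p : ℂ × ℂ => p.1 * p.2) (hfm.prodMk hgm)
      ((measurable_fst.mul measurable_snd).aestronglyMeasurable)]
  rw [e1, hmap, integral_prod_mul (f := fun x => x) (g := fun x => x)]
  rw [integral_map hfm, integral_map hgm] <;>
    exact measurable_id.aestronglyMeasurable

lemma indep_integral_prod {ι : Type*} [DecidableEq ι] {F : ι → Ω → ℂ}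
    (h : iIndepFun F μ) (hm : ∀ i, Measurable (F i))
    (hi : ∀ i, Integrable (F i) μ) (s : Finset ι) :
    Integrable (fun ω => ∏ i ∈ s, F i ω) μ ∧
      ∫ ω, ∏ i ∈ s, F i ω ∂μ = ∏ i ∈ s, ∫ ω, F i ω ∂μ := by
  classical
  induction s using Finset.cons_induction with
  | empty => simp
  | cons i s his ih =>
    have hIndep : IndepFun (fun ω => ∏ j ∈ s, F j ω) (F i) μ := by
      have := h.indepFun_finset_prod_of_notMem hm his
      simpa [Finset.prod_fn] using this
    have hint : Integrable (fun ω => (∏ j ∈ s, F j ω) * F i ω) μ := by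
      have := hIndep.integrable_mul ih.1 (hi i)
      simpa [Pi.mul_def] using this
    constructor
    · simp only [Finset.prod_cons]
      have : (fun ω => F i ω * ∏ j ∈ s, F j ω)
          = fun ω => (∏ j ∈ s, F j ω) * F i ω := by
        funext ω; ring
      rw [this]
      exact hint
    · simp only [Finset.prod_cons]
      have e : (fun ω => F i ω * ∏ j ∈ s, F j ω)
          = fun ω => (∏ j ∈ s, F j ω) * F i ω := by
        funext ω; ring
      calc ∫ ω, F i ω * ∏ j ∈ s, F j ω ∂μ
          = ∫ ω, (∏ j ∈ s, F j ω) * F i ω ∂μ := by rw [e]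
        _ = (∫ ω, ∏ j ∈ s, F j ω ∂μ) * ∫ ω, F i ω ∂μ :=
            indep_integral_mul hIndep ih.1 (hi i)
        _ = (∏ j ∈ s, ∫ ω, F j ω ∂μ) * ∫ ω, F i ω ∂μ := by rw [ih.2]
        _ = (∫ ω, F i ω ∂μ) * ∏ j ∈ s, ∫ ω, F j ω ∂μ := by ring

end aux


/-- Under the assumptions of the linear large deviation bound, the `r`-th moment satisfies
`E|∑ a_i X_i|^r ≤ ∑_{k=1}^{r/2} S(r,k) γ^{2k} ψ^{r−2k}` where
`γ = ((1/N)∑|a_i|²)^{1/2}` and `ψ = (max_i |a_i|)/q`. -/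
theorem stmt_11 {Ω : Type*} [MeasurableSpace Ω] (μ : Measure Ω) [IsProbabilityMeasure μ]
    {N : ℕ} (r : ℕ) (hr : Even r) (hr2 : 2 ≤ r)
    (q : ℝ) (hq1 : 1 ≤ q) (hqN : q ≤ Real.sqrt N)
    (X : Fin N → Ω → ℂ) (hmeas : ∀ i, Measurable (X i))
    (hindep : iIndepFun X μ)
    (hint : ∀ i, Integrable (X i) μ)
    (hmean : ∀ i, ∫ ω, X i ω ∂μ = 0)
    (hintk : ∀ i, ∀ k, 2 ≤ k → k ≤ r → Integrable (fun ω => ‖X i ω‖ ^ k) μ)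
    (hmom : ∀ i, ∀ k, 2 ≤ k → k ≤ r →
      ∫ ω, ‖X i ω‖ ^ k ∂μ ≤ 1 / (N * q ^ (k - 2)))
    (a : Fin N → ℂ) :
    ∫ ω, ‖∑ i, a i * X i ω‖ ^ r ∂μ
      ≤ ∑ k ∈ Finset.Icc 1 (r / 2), (stirling r k : ℝ) *
          Real.sqrt ((1 / N) * ∑ i, ‖a i‖ ^ 2) ^ (2 * k) *
          ((⨆ i, ‖a i‖) / q) ^ (r - 2 * k) := by
  classical
  obtain ⟨m, hm⟩ := hr
  subst hm
  have hdiv : (m + m) / 2 = m := by omega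
  rw [hdiv]
  have hm1 : 1 ≤ m := by omega
  have hq0 : 0 < q := lt_of_lt_of_le one_pos hq1
  set M : ℝ := ⨆ i, ‖a i‖ with hMdef
  have hM0 : 0 ≤ M := Real.iSup_nonneg fun i => (norm_nonneg _)
  have haM : ∀ i, ‖a i‖ ≤ M :=
    fun i => le_ciSup (f := fun i => ‖a i‖) (Set.Finite.bddAbove (Set.finite_range _)) i
  set W : ℝ := ∑ i, ‖a i‖ ^ 2 with hWdef
  have hW0 : 0 ≤ W := Finset.sum_nonneg fun i _ => sq_nonneg _
  set ψ : ℝ := M / q with hψdef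
  have hψ0 : 0 ≤ ψ := div_nonneg hM0 hq0.le
  set S : Ω → ℂ := fun ω => ∑ i, a i * X i ω with hSdef
  set φ : Fin (m + m) → ℂ → ℂ :=
    fun j z => if (j : ℕ) < m then z else conj z with hφdef
  set A : Fin (m + m) → Fin N → ℂ :=
    fun j i => if (j : ℕ) < m then a i else conj (a i) with hAdef
  have hφmeas : ∀ j, Measurable (φ j) := by
    intro j
    simp only [hφdef]
    split
    · exact measurable_id
    · exact RCLike.continuous_conj.measurable
  have hφabs : ∀ j z, ‖φ j z‖ = ‖z‖ := by
    intro j z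
    simp only [hφdef]
    split
    · rfl
    · exact Complex.norm_conj z
  -- pointwise expansion
  have expand : ∀ ω : Ω, ((‖S ω‖ ^ (m + m) : ℝ) : ℂ)
      = ∑ G : Fin (m + m) → Fin N, ∏ j, (A j (G j) * φ j (X (G j) ω)) := by
    intro ω
    have h1 : ∀ j : Fin (m + m), ∑ i, A j i * φ j (X i ω)
        = if (j : ℕ) < m then S ω else conj (S ω) := by
      intro j
      by_cases hj : (j : ℕ) < m
      · simp only [hAdef, hφdef, hj, if_true, hSdef]
      · simp only [hAdef, hφdef, hj, if_false, hSdef, map_sum, map_mul]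
    calc ((‖S ω‖ ^ (m + m) : ℝ) : ℂ)
        = (S ω * conj (S ω)) ^ m := by
          rw [Complex.mul_conj, ← Complex.sq_norm]
          push_cast
          rw [← pow_mul]
          ring_nf
      _ = (S ω) ^ m * (conj (S ω)) ^ m := mul_pow _ _ _
      _ = (∏ _j : Fin m, S ω) * ∏ _j : Fin m, conj (S ω) := by
          rw [Finset.prod_const, Finset.prod_const]
          simp
      _ = ∏ j : Fin (m + m), (if (j : ℕ) < m then S ω else conj (S ω)) := by
          rw [Fin.prod_univ_add]
          congr 1
          · apply Finset.prod_congr rfl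
            intro j _
            have : ((Fin.castAdd m j : Fin (m + m)) : ℕ) < m := by
              simpa using j.isLt
            rw [if_pos this]
          · apply Finset.prod_congr rfl
            intro j _
            have : ¬ ((Fin.natAdd m j : Fin (m + m)) : ℕ) < m := by
              simp
            rw [if_neg this]
      _ = ∏ j : Fin (m + m), ∑ i, A j i * φ j (X i ω) := by
          exact (Finset.prod_congr rfl fun j _ => h1 j).symm
      _ = ∑ G : Fin (m + m) → Fin N, ∏ j, (A j (G j) * φ j (X (G j) ω)) :=
          Fintype.prod_sum _
  -- fiber data
  set cnt : (Fin (m + m) → Fin N) → Fin N → ℕ :=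
    fun G i => (Finset.univ.filter (fun j => G j = i)).card with hcntdef
  set F : (Fin (m + m) → Fin N) → Fin N → Ω → ℂ :=
    fun G i ω => ∏ j ∈ Finset.univ.filter (fun j => G j = i), φ j (X i ω) with hFdef
  set C : (Fin (m + m) → Fin N) → ℂ := fun G => ∏ j, A j (G j) with hCdef
  set EF : (Fin (m + m) → Fin N) → Fin N → ℂ := fun G i => ∫ ω, F G i ω ∂μ with hEFdef
  have hcnt_le : ∀ (G : Fin (m + m) → Fin N) (i : Fin N), cnt G i ≤ m + m := by
    intro G i
    calc cnt G i ≤ (Finset.univ : Finset (Fin (m+m))).card := Finset.card_filter_le _ _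
      _ = m + m := by simp
  have hcnt_sum : ∀ G : Fin (m + m) → Fin N, ∑ i, cnt G i = m + m := by
    intro G
    rw [← Finset.card_eq_sum_card_fiberwise (f := G) (t := Finset.univ)
      (fun j _ => Finset.mem_univ _)]
    simp
  have hFmeas : ∀ (G : Fin (m + m) → Fin N) (i : Fin N), Measurable (F G i) :=
    fun G i => Finset.measurable_prod _ fun j _ => (hφmeas j).comp (hmeas i)
  have hFabs : ∀ (G : Fin (m + m) → Fin N) (i : Fin N) (ω : Ω), ‖F G i ω‖ = ‖X i ω‖ ^ cnt G i := by
    intro G i ω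
    simp only [hFdef]
    rw [norm_prod]
    rw [Finset.prod_congr rfl fun j _ => hφabs j (X i ω), Finset.prod_const]
  have habs_int : ∀ (i : Fin N) (c : ℕ), c ≤ m + m →
      Integrable (fun ω => ‖X i ω‖ ^ c) μ := by
    intro i c hc
    match c with
    | 0 => simpa using integrable_const (1 : ℝ)
    | 1 =>
      simp only [pow_one]
      simpa using (hint i).norm
    | (c + 2) => exact hintk i (c + 2) (by omega) hc
  have hFint : ∀ (G : Fin (m + m) → Fin N) (i : Fin N), Integrable (F G i) μ := by
    intro G i
    apply Integrable.mono' (habs_int i (cnt G i) (hcnt_le G i))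
      (hFmeas G i).aestronglyMeasurable
    filter_upwards with ω
    rw [hFabs G i ω]
  have hFindep : ∀ G : Fin (m + m) → Fin N, iIndepFun (F G) μ := by
    intro G
    exact hindep.comp
      (fun (i : Fin N) (z : ℂ) => ∏ j ∈ Finset.univ.filter (fun j => G j = i), φ j z)
      (fun i => Finset.measurable_prod _ fun j _ => hφmeas j)
  -- split the product
  have hsplit_fun : ∀ (G : Fin (m + m) → Fin N) (ω : Ω),
      ∏ j, (A j (G j) * φ j (X (G j) ω)) = C G * ∏ i, F G i ω := by
    intro G ω
    rw [Finset.prod_mul_distrib]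
    congr 1
    rw [← Finset.prod_fiberwise_of_maps_to (g := G) (t := Finset.univ)
      (fun j _ => Finset.mem_univ _) (fun j => φ j (X (G j) ω))]
    apply Finset.prod_congr rfl
    intro i _
    apply Finset.prod_congr rfl
    intro j hj
    rw [(Finset.mem_filter.mp hj).2]
  have hHint : ∀ G : Fin (m + m) → Fin N, Integrable (fun ω => ∏ j, (A j (G j) * φ j (X (G j) ω))) μ := by
    intro G
    have := ((indep_integral_prod (hFindep G) (hFmeas G) (hFint G) Finset.univ).1).const_mul (C G)
    apply this.congr
    filter_upwards with ω
    exact (hsplit_fun G ω).symm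
  have hsplit : ∀ G : Fin (m + m) → Fin N, ∫ ω, ∏ j, (A j (G j) * φ j (X (G j) ω)) ∂μ = C G * ∏ i, EF G i := by
    intro G
    calc ∫ ω, ∏ j, (A j (G j) * φ j (X (G j) ω)) ∂μ
        = ∫ ω, C G * ∏ i, F G i ω ∂μ := by
          apply integral_congr_ae
          filter_upwards with ω
          exact hsplit_fun G ω
      _ = C G * ∫ ω, ∏ i, F G i ω ∂μ := integral_const_mul _ _
      _ = C G * ∏ i, EF G i := by
          rw [(indep_integral_prod (hFindep G) (hFmeas G) (hFint G) Finset.univ).2]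
  -- expectation facts
  have hEF0 : ∀ (G : Fin (m + m) → Fin N) (i : Fin N), cnt G i = 0 → EF G i = 1 := by
    intro G i h
    have hemp : Finset.univ.filter (fun j => G j = i) = ∅ := Finset.card_eq_zero.mp h
    simp only [hEFdef, hFdef, hemp, Finset.prod_empty]
    simp
  have hEF1 : ∀ (G : Fin (m + m) → Fin N) (i : Fin N), cnt G i = 1 → EF G i = 0 := by
    intro G i h
    obtain ⟨j0, hj0⟩ := Finset.card_eq_one.mp h
    simp only [hEFdef, hFdef, hj0, Finset.prod_singleton]
    by_cases hjm : (j0 : ℕ) < m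
    · simp only [hφdef, hjm, if_true]
      exact hmean i
    · simp only [hφdef, hjm, if_false]
      rw [integral_conj, hmean i, map_zero]
  have hEFb : ∀ (G : Fin (m + m) → Fin N) (i : Fin N), 2 ≤ cnt G i → ‖EF G i‖ ≤ 1 / (N * q ^ (cnt G i - 2)) := by
    intro G i h
    calc ‖EF G i‖ ≤ ∫ ω, ‖F G i ω‖ ∂μ := norm_integral_le_integral_norm _
      _ = ∫ ω, ‖X i ω‖ ^ cnt G i ∂μ := by
          apply integral_congr_ae
          filter_upwards with ω
          rw [hFabs G i ω]
      _ ≤ 1 / (N * q ^ (cnt G i - 2)) := hmom i (cnt G i) h (hcnt_le G i)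
  -- membership and support facts
  have hmem : ∀ (G : Fin (m + m) → Fin N) (i : Fin N),
      i ∈ Finset.univ.image G ↔ cnt G i ≠ 0 := by
    intro G i
    constructor
    · intro hi
      obtain ⟨j, _, hj⟩ := Finset.mem_image.mp hi
      exact Finset.card_ne_zero_of_mem (Finset.mem_filter.mpr ⟨Finset.mem_univ j, hj⟩)
    · intro h
      obtain ⟨j, hj⟩ := Finset.card_pos.mp (Nat.pos_of_ne_zero h)
      exact Finset.mem_image.mpr ⟨j, Finset.mem_univ j, (Finset.mem_filter.mp hj).2⟩
  have hsumc : ∀ G : Fin (m + m) → Fin N,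
      ∑ i ∈ Finset.univ.image G, cnt G i = m + m := by
    intro G
    calc ∑ i ∈ Finset.univ.image G, cnt G i
        = ∑ i, cnt G i := Finset.sum_subset (Finset.subset_univ _)
          (fun i _ hi => by
            by_contra h
            exact hi ((hmem G i).mpr h))
      _ = m + m := hcnt_sum G
  -- main bound per good G
  have hgood_bound : ∀ G : Fin (m + m) → Fin N, (∀ i, cnt G i ≠ 1) →
      ‖C G * ∏ i, EF G i‖ ≤ ψ ^ (m + m - 2 * (Finset.univ.image G).card) *
        (1 / N) ^ (Finset.univ.image G).card *
        ∏ i ∈ Finset.univ.image G, ‖a i‖ ^ 2 := by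
    intro G hG
    set t : Finset (Fin N) := Finset.univ.image G with htdef
    set k : ℕ := t.card with hkdef
    have h2 : ∀ i ∈ t, 2 ≤ cnt G i := by
      intro i hi
      have h0 := (hmem G i).mp hi
      have h1 := hG i
      omega
    have hsum : ∑ i ∈ t, cnt G i = m + m := hsumc G
    have hsub : ∑ i ∈ t, (cnt G i - 2) = m + m - 2 * k := by
      have he : ∑ i ∈ t, ((cnt G i - 2) + 2) = m + m := by
        rw [← hsum]
        exact Finset.sum_congr rfl fun i hi => Nat.sub_add_cancel (h2 i hi)
      rw [Finset.sum_add_distrib, Finset.sum_const, smul_eq_mul] at he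
      omega
    have hCnorm : ‖C G‖ = ∏ i ∈ t, ‖a i‖ ^ cnt G i := by
      calc ‖C G‖ = ‖∏ j, A j (G j)‖ := by
            rw [hCdef]
        _ = ∏ j, ‖A j (G j)‖ := norm_prod _ _
        _ = ∏ j, ‖a (G j)‖ := by
            apply Finset.prod_congr rfl
            intro j _
            simp only [hAdef]
            split
            · rfl
            · exact Complex.norm_conj _
        _ = ∏ i ∈ t, ‖a i‖ ^ cnt G i :=
            Finset.prod_comp (fun i => ‖a i‖) G
    have hEnorm : ‖∏ i, EF G i‖ = ∏ i ∈ t, ‖EF G i‖ := by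
      rw [norm_prod]
      symm
      apply Finset.prod_subset (Finset.subset_univ _)
      intro i _ hi
      have hz : cnt G i = 0 := by
        by_contra h
        exact hi ((hmem G i).mpr h)
      rw [hEF0 G i hz, norm_one]
    have key : ‖C G * ∏ i, EF G i‖
        = ∏ i ∈ t, (‖a i‖ ^ cnt G i * ‖EF G i‖) := by
      rw [norm_mul, hCnorm, hEnorm, ← Finset.prod_mul_distrib]
    rw [key]
    calc ∏ i ∈ t, (‖a i‖ ^ cnt G i * ‖EF G i‖)
        ≤ ∏ i ∈ t, (‖a i‖ ^ 2 * (1 / N) * ψ ^ (cnt G i - 2)) := by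
          apply Finset.prod_le_prod
          · intro i _
            exact mul_nonneg (pow_nonneg (norm_nonneg _) _) (norm_nonneg _)
          · intro i hi
            have h2i := h2 i hi
            have hb := hEFb G i h2i
            calc ‖a i‖ ^ cnt G i * ‖EF G i‖
                ≤ ‖a i‖ ^ cnt G i * (1 / (N * q ^ (cnt G i - 2))) := by
                  apply mul_le_mul_of_nonneg_left hb (pow_nonneg (norm_nonneg _) _)
              _ ≤ (‖a i‖ ^ 2 * M ^ (cnt G i - 2))
                    * (1 / (N * q ^ (cnt G i - 2))) := by
                  apply mul_le_mul_of_nonneg_right _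
                    (div_nonneg zero_le_one
                      (mul_nonneg (Nat.cast_nonneg N) (pow_nonneg hq0.le _)))
                  calc ‖a i‖ ^ cnt G i
                      = ‖a i‖ ^ 2 * ‖a i‖ ^ (cnt G i - 2) := by
                        rw [← pow_add]
                        congr 1
                        omega
                    _ ≤ ‖a i‖ ^ 2 * M ^ (cnt G i - 2) :=
                        mul_le_mul_of_nonneg_left
                          (pow_le_pow_left₀ (norm_nonneg _) (haM i) _)
                          (pow_nonneg (norm_nonneg _) _)
              _ = ‖a i‖ ^ 2 * (1 / N) * ψ ^ (cnt G i - 2) := by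
                  simp only [hψdef, div_pow, one_div, mul_inv, div_eq_mul_inv]
                  ring
      _ = ψ ^ (m + m - 2 * k) * (1 / N) ^ k
            * ∏ i ∈ t, ‖a i‖ ^ 2 := by
          rw [Finset.prod_mul_distrib, Finset.prod_mul_distrib, Finset.prod_const,
            Finset.prod_pow_eq_pow_sum, hsub, hkdef]
          ring
  have hgood_k : ∀ G : Fin (m + m) → Fin N, (∀ i, cnt G i ≠ 1) →
      1 ≤ (Finset.univ.image G).card ∧ 2 * (Finset.univ.image G).card ≤ m + m := by
    intro G hG
    have h2 : ∀ i ∈ Finset.univ.image G, 2 ≤ cnt G i := by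
      intro i hi
      have h0 := (hmem G i).mp hi
      have h1 := hG i
      omega
    have hsum := hsumc G
    constructor
    · by_contra h
      have : (Finset.univ.image G) = ∅ := by
        rw [← Finset.card_eq_zero]; omega
      rw [this, Finset.sum_empty] at hsum
      omega
    · calc 2 * (Finset.univ.image G).card
          = ∑ _i ∈ Finset.univ.image G, 2 := by
            rw [Finset.sum_const, smul_eq_mul, mul_comm]
        _ ≤ ∑ i ∈ Finset.univ.image G, cnt G i := Finset.sum_le_sum h2
        _ = m + m := hsum
  -- reduction to the sum of norms
  have e2 : ∫ ω, ‖S ω‖ ^ (m + m) ∂μ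
      = (∑ G : Fin (m + m) → Fin N, C G * ∏ i, EF G i).re := by
    have hc : ((∫ ω, ‖S ω‖ ^ (m + m) ∂μ : ℝ) : ℂ)
        = ∑ G : Fin (m + m) → Fin N, C G * ∏ i, EF G i := by
      rw [show ((∫ ω, ‖S ω‖ ^ (m + m) ∂μ : ℝ) : ℂ)
          = ∫ ω, ((‖S ω‖ ^ (m + m) : ℝ) : ℂ) ∂μ
        from (integral_ofReal (𝕜 := ℂ) (f := fun ω => ‖S ω‖ ^ (m + m))).symm]
      calc ∫ ω, ((‖S ω‖ ^ (m + m) : ℝ) : ℂ) ∂μ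
          = ∫ ω, ∑ G : Fin (m + m) → Fin N, ∏ j, (A j (G j) * φ j (X (G j) ω)) ∂μ := by
            apply integral_congr_ae
            filter_upwards with ω
            exact expand ω
        _ = ∑ G : Fin (m + m) → Fin N, ∫ ω, ∏ j, (A j (G j) * φ j (X (G j) ω)) ∂μ :=
            integral_finset_sum _ (fun G _ => hHint G)
        _ = ∑ G : Fin (m + m) → Fin N, C G * ∏ i, EF G i :=
            Finset.sum_congr rfl fun G _ => hsplit G
    rw [← hc, Complex.ofReal_re]
  have step1 : ∫ ω, ‖S ω‖ ^ (m + m) ∂μ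
      ≤ ∑ G : Fin (m + m) → Fin N, ‖C G * ∏ i, EF G i‖ := by
    rw [e2]
    calc (∑ G : Fin (m + m) → Fin N, C G * ∏ i, EF G i).re
        ≤ ‖∑ G : Fin (m + m) → Fin N, C G * ∏ i, EF G i‖ := Complex.re_le_norm _
      _ = ‖∑ G : Fin (m + m) → Fin N, C G * ∏ i, EF G i‖ := rfl
      _ ≤ ∑ G : Fin (m + m) → Fin N, ‖C G * ∏ i, EF G i‖ := norm_sum_le _ _
  -- the combinatorial bound
  have step2 : ∑ G : Fin (m + m) → Fin N, ‖C G * ∏ i, EF G i‖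
      ≤ ∑ k ∈ Finset.Icc 1 m, (stirling (m + m) k : ℝ) *
          Real.sqrt ((1 / N) * W) ^ (2 * k) * ψ ^ (m + m - 2 * k) := by
    set w : Fin N → ℝ := fun i => ‖a i‖ ^ 2 with hwdef
    have hw : ∀ i, 0 ≤ w i := fun i => sq_nonneg _
    set D : (Fin (m + m) → Fin N) → ℝ := fun G =>
      if (∀ i, cnt G i ≠ 1) then ψ ^ (m + m - 2 * (Finset.univ.image G).card) *
        (1 / N) ^ (Finset.univ.image G).card * ∏ i ∈ Finset.univ.image G, w i
      else 0 with hDdef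
    have hDnn : ∀ G, 0 ≤ D G := by
      intro G
      simp only [hDdef]
      split
      · apply mul_nonneg
        apply mul_nonneg (pow_nonneg hψ0 _)
        · exact pow_nonneg (div_nonneg zero_le_one (Nat.cast_nonneg N)) _
        · exact Finset.prod_nonneg fun i _ => hw i
      · exact le_rfl
    have h1 : ∑ G : Fin (m + m) → Fin N, ‖C G * ∏ i, EF G i‖
        ≤ ∑ G : Fin (m + m) → Fin N, D G := by
      apply Finset.sum_le_sum
      intro G _
      by_cases hG : ∀ i, cnt G i ≠ 1
      · simp only [hDdef]
        rw [if_pos hG]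
        exact hgood_bound G hG
      · push_neg at hG
        obtain ⟨i, hi⟩ := hG
        have : (∏ i, EF G i) = 0 :=
          Finset.prod_eq_zero (Finset.mem_univ i) (hEF1 G i hi)
        rw [this, mul_zero, norm_zero]
        exact hDnn G
    have h2 : ∑ G : Fin (m + m) → Fin N, D G
        = ∑ G ∈ Finset.univ.filter
            (fun G : Fin (m + m) → Fin N => (Finset.univ.image G).card ∈ Finset.Icc 1 m),
            D G := by
      symm
      apply Finset.sum_filter_of_ne
      intro G _ hD
      have hG : ∀ i, cnt G i ≠ 1 := by
        by_contra h
        apply hD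
        simp only [hDdef]
        rw [if_neg h]
      obtain ⟨hk1, hk2⟩ := hgood_k G hG
      rw [Finset.mem_Icc]
      omega
    have h3 : ∑ G ∈ Finset.univ.filter
            (fun G : Fin (m + m) → Fin N => (Finset.univ.image G).card ∈ Finset.Icc 1 m),
            D G
        = ∑ k ∈ Finset.Icc 1 m,
            ∑ G ∈ (Finset.univ.filter
              (fun G : Fin (m + m) → Fin N =>
                (Finset.univ.image G).card ∈ Finset.Icc 1 m)).filter
              (fun G => (Finset.univ.image G).card = k), D G := by
      symm
      exact Finset.sum_fiberwise_of_maps_to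
        (fun G hG => (Finset.mem_filter.mp hG).2) D
    have h4 : ∀ k ∈ Finset.Icc 1 m,
        ∑ G ∈ (Finset.univ.filter
            (fun G : Fin (m + m) → Fin N =>
              (Finset.univ.image G).card ∈ Finset.Icc 1 m)).filter
            (fun G => (Finset.univ.image G).card = k), D G
        ≤ (stirling (m + m) k : ℝ) *
            Real.sqrt ((1 / N) * W) ^ (2 * k) * ψ ^ (m + m - 2 * k) := by
      intro k hk
      have hconst : (0:ℝ) ≤ ψ ^ (m + m - 2 * k) * (1 / N) ^ k :=
        mul_nonneg (pow_nonneg hψ0 _)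
          (pow_nonneg (div_nonneg zero_le_one (Nat.cast_nonneg N)) _)
      calc ∑ G ∈ (Finset.univ.filter
            (fun G : Fin (m + m) → Fin N =>
              (Finset.univ.image G).card ∈ Finset.Icc 1 m)).filter
            (fun G => (Finset.univ.image G).card = k), D G
          ≤ ∑ G ∈ (Finset.univ.filter
              (fun G : Fin (m + m) → Fin N =>
                (Finset.univ.image G).card ∈ Finset.Icc 1 m)).filter
              (fun G => (Finset.univ.image G).card = k),
              (ψ ^ (m + m - 2 * k) * (1 / N) ^ k * ∏ i ∈ Finset.univ.image G, w i) := by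
            apply Finset.sum_le_sum
            intro G hG
            have hcard : (Finset.univ.image G).card = k := (Finset.mem_filter.mp hG).2
            simp only [hDdef]
            split
            · rw [hcard]
            · exact mul_nonneg hconst (Finset.prod_nonneg fun i _ => hw i)
        _ ≤ ∑ G ∈ Finset.univ.filter
              (fun G : Fin (m + m) → Fin N => (Finset.univ.image G).card = k),
              (ψ ^ (m + m - 2 * k) * (1 / N) ^ k * ∏ i ∈ Finset.univ.image G, w i) := by
            apply Finset.sum_le_sum_of_subset_of_nonneg
            · intro G hG
              rw [Finset.mem_filter] at hG ⊢
              exact ⟨Finset.mem_univ G, hG.2⟩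
            · intro G _ _
              exact mul_nonneg hconst (Finset.prod_nonneg fun i _ => hw i)
        _ = ψ ^ (m + m - 2 * k) * (1 / N) ^ k *
              ∑ G ∈ Finset.univ.filter
                (fun G : Fin (m + m) → Fin N => (Finset.univ.image G).card = k),
                ∏ i ∈ Finset.univ.image G, w i := by
            rw [Finset.mul_sum]
        _ ≤ ψ ^ (m + m - 2 * k) * (1 / N) ^ k *
              ((stirling (m + m) k : ℝ) * (∑ i, w i) ^ k) :=
            mul_le_mul_of_nonneg_left (count_le w hw (m + m) k) hconst
        _ = (stirling (m + m) k : ℝ) *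
              Real.sqrt ((1 / N) * W) ^ (2 * k) * ψ ^ (m + m - 2 * k) := by
            have hs : Real.sqrt ((1 / N) * W) ^ (2 * k) = (1 / N) ^ k * W ^ k := by
              rw [pow_mul, Real.sq_sqrt
                (mul_nonneg (div_nonneg zero_le_one (Nat.cast_nonneg N)) hW0), mul_pow]
            rw [hs, hWdef]
            ring
    calc ∑ G : Fin (m + m) → Fin N, ‖C G * ∏ i, EF G i‖
        ≤ ∑ G : Fin (m + m) → Fin N, D G := h1
      _ = _ := h2
      _ = _ := h3
      _ ≤ ∑ k ∈ Finset.Icc 1 m, (stirling (m + m) k : ℝ) *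
            Real.sqrt ((1 / N) * W) ^ (2 * k) * ψ ^ (m + m - 2 * k) :=
          Finset.sum_le_sum h4
  exact le_trans step1 step2
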